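/- For 0 ≤ k ≤ n and 0 ≤ r < s, C(n,k) · ∏_{i=0}^{n−k−1}(2s − 2r − i) = Σ_{j=k}^{n} (−1)^{n−j} · L_r(n,j) · L_s(j,k), where the product is the falling factorial (2s−2r)·(2s−2r−1)···(2s−2r−(n−k−1)). -/
import Mathlib


open Finset

/-- The r-Lah numbers `L_r(n,k)` as integers. -/
def rLah (r : ℕ) : ℕ → ℕ → ℤ
  | 0, 0 => 1
  | 0, _ + 1 => 0
  | n + 1, 0 => ((n : ℤ) + 2 * r) * rLah r n 0
  | n + 1, k + 1 => rLah r n k + ((n : ℤ) + (k + 1) + 2 * r) * rLah r n (k + 1)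

/-- The unsigned r-Stirling numbers of the first kind `c_r(n,k)` as integers. -/
def rStirling1 (r : ℕ) : ℕ → ℕ → ℤ
  | 0, 0 => 1
  | 0, _ + 1 => 0
  | n + 1, 0 => ((n : ℤ) + r) * rStirling1 r n 0
  | n + 1, k + 1 => rStirling1 r n k + ((n : ℤ) + r) * rStirling1 r n (k + 1)

/-- The r-Stirling numbers of the second kind `S_r(n,k)` as integers. -/
def rStirling2 (r : ℕ) : ℕ → ℕ → ℤ
  | 0, 0 => 1
  | 0, _ + 1 => 0
  | n + 1, 0 => (r : ℤ) * rStirling2 r n 0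
  | n + 1, k + 1 => rStirling2 r n k + ((k : ℤ) + 1 + r) * rStirling2 r n (k + 1)

lemma rLah_zero_of_lt (r : ℕ) : ∀ n k, n < k → rLah r n k = 0
  | 0, _ + 1, _ => rfl
  | n + 1, k + 1, h => by
      show rLah r n k + ((n : ℤ) + (k + 1) + 2 * r) * rLah r n (k + 1) = 0
      rw [rLah_zero_of_lt r n k (by omega), rLah_zero_of_lt r n (k + 1) (by omega)]
      ring

lemma rLah_succ_succ (r n k : ℕ) :
    rLah r (n + 1) (k + 1)
      = rLah r n k + ((n : ℤ) + (k + 1) + 2 * r) * rLah r n (k + 1) := rfl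

lemma rLah_succ_zero (r n : ℕ) :
    rLah r (n + 1) 0 = ((n : ℤ) + 2 * r) * rLah r n 0 := rfl

/-- The key sum-manipulation step. -/
lemma step (r s n k : ℕ) :
    ∑ j ∈ range (n + 2), (-1 : ℤ) ^ (n + 1 - j) * rLah r (n + 1) j * rLah s j k
    = ∑ j ∈ range (n + 1), (-1 : ℤ) ^ (n - j) * rLah r n j *
        (rLah s (j + 1) k - ((n : ℤ) + j + 2 * r) * rLah s j k) := by
  have hsplit := Finset.sum_range_succ'
    (fun j => (-1 : ℤ) ^ (n + 1 - j) * rLah r (n + 1) j * rLah s j k) (n + 1)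
  rw [hsplit]
  -- auxiliary sum h
  have haux :
      ∑ j ∈ range (n + 2), (-1 : ℤ) ^ (n + 1 - j) * (((n : ℤ) + j + 2 * r) * rLah r n j)
        * rLah s j k
      = - ∑ j ∈ range (n + 1), (-1 : ℤ) ^ (n - j) * (((n : ℤ) + j + 2 * r) * rLah r n j)
        * rLah s j k := by
    rw [Finset.sum_range_succ, rLah_zero_of_lt r n (n + 1) (by omega)]
    rw [← Finset.sum_neg_distrib]
    simp only [mul_zero, zero_mul, add_zero]
    refine Finset.sum_congr rfl fun j hj => ?_
    have hj' : j ≤ n := by simpa [Nat.lt_succ_iff] using hj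
    have h1 : n + 1 - j = (n - j) + 1 := by omega
    rw [h1, pow_succ]
    ring
  have haux2 := Finset.sum_range_succ'
    (fun j => (-1 : ℤ) ^ (n + 1 - j) * (((n : ℤ) + j + 2 * r) * rLah r n j) * rLah s j k)
    (n + 1)
  rw [haux2] at haux
  -- expand rLah r (n+1) (j+1)
  have hexp : ∀ j ∈ range (n + 1),
      (-1 : ℤ) ^ (n + 1 - (j + 1)) * rLah r (n + 1) (j + 1) * rLah s (j + 1) k
      = (-1 : ℤ) ^ (n - j) * rLah r n j * rLah s (j + 1) k
        + (-1 : ℤ) ^ (n + 1 - (j + 1)) * (((n : ℤ) + (j + 1) + 2 * r) * rLah r n (j + 1))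
          * rLah s (j + 1) k := by
    intro j hj
    rw [rLah_succ_succ]
    have h1 : n + 1 - (j + 1) = n - j := by omega
    rw [h1]
    push_cast
    ring
  rw [Finset.sum_congr rfl hexp, Finset.sum_add_distrib]
  have e0 : ((-1 : ℤ) ^ (n + 1 - 0) * rLah r (n + 1) 0 * rLah s 0 k)
      = (-1 : ℤ) ^ (n + 1 - 0) * (((n : ℤ) + 0 + 2 * r) * rLah r n 0) * rLah s 0 k := by
    rw [rLah_succ_zero]; push_cast; ring
  have key : ∑ j ∈ range (n + 1),
        (-1 : ℤ) ^ (n + 1 - (j + 1)) * (((n : ℤ) + (j + 1) + 2 * r) * rLah r n (j + 1))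
          * rLah s (j + 1) k
      + (-1 : ℤ) ^ (n + 1 - 0) * rLah r (n + 1) 0 * rLah s 0 k
      = - ∑ j ∈ range (n + 1), (-1 : ℤ) ^ (n - j) * (((n : ℤ) + j + 2 * r) * rLah r n j)
        * rLah s j k := by
    rw [e0]
    push_cast at haux ⊢
    linarith [haux]
  rw [add_assoc, key, ← Finset.sum_neg_distrib, ← Finset.sum_add_distrib]
  refine Finset.sum_congr rfl fun j hj => ?_
  ring

lemma binom_fall (d : ℤ) (n k : ℕ) :
    (((n + 1).choose (k + 1) : ℕ) : ℤ) * ∏ i ∈ range (n + 1 - (k + 1)), (d - i)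
    = ((n.choose k : ℕ) : ℤ) * ∏ i ∈ range (n - k), (d - i)
      + (d + (k + 1) - n) *
        (((n.choose (k + 1) : ℕ) : ℤ) * ∏ i ∈ range (n - (k + 1)), (d - i)) := by
  rcases lt_trichotomy k n with h | h | h
  · have h1 : n + 1 - (k + 1) = n - k := by omega
    have h2 : n - k = (n - (k + 1)) + 1 := by omega
    have h3 : ((n - (k + 1) : ℕ) : ℤ) = (n : ℤ) - (k + 1) := by omega
    rw [h1, h2, prod_range_succ, Nat.choose_succ_succ, h3]
    push_cast
    ring
  · subst h
    simp [Nat.choose_self, Nat.choose_succ_self]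
  · rw [Nat.choose_eq_zero_of_lt (by omega), Nat.choose_eq_zero_of_lt (by omega),
      Nat.choose_eq_zero_of_lt (by omega)]
    simp

lemma main (r s n : ℕ) : ∀ k,
    (∑ j ∈ range (n + 1), (-1 : ℤ) ^ (n - j) * rLah r n j * rLah s j k)
    = ((n.choose k : ℕ) : ℤ) * ∏ i ∈ range (n - k), (2 * (s : ℤ) - 2 * r - i) := by
  induction n with
  | zero =>
    intro k
    cases k with
    | zero => simp [rLah]
    | succ k => simp [rLah, rLah_zero_of_lt s 0 (k + 1) (by omega)]
  | succ n ih =>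
    intro k
    rw [show n + 1 + 1 = n + 2 from rfl, step r s n k]
    cases k with
    | zero =>
      have hterm : ∀ j ∈ range (n + 1),
          (-1 : ℤ) ^ (n - j) * rLah r n j *
            (rLah s (j + 1) 0 - ((n : ℤ) + j + 2 * r) * rLah s j 0)
          = (2 * (s : ℤ) - 2 * r - n) * ((-1 : ℤ) ^ (n - j) * rLah r n j * rLah s j 0) := by
        intro j hj
        rw [rLah_succ_zero]
        ring
      rw [Finset.sum_congr rfl hterm, ← Finset.mul_sum, ih 0]
      simp only [Nat.sub_zero, Nat.choose_zero_right, Nat.cast_one, one_mul,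
        prod_range_succ]
      ring
    | succ k =>
      have hterm : ∀ j ∈ range (n + 1),
          (-1 : ℤ) ^ (n - j) * rLah r n j *
            (rLah s (j + 1) (k + 1) - ((n : ℤ) + j + 2 * r) * rLah s j (k + 1))
          = (-1 : ℤ) ^ (n - j) * rLah r n j * rLah s j k
            + (2 * (s : ℤ) - 2 * r + (k + 1) - n) *
              ((-1 : ℤ) ^ (n - j) * rLah r n j * rLah s j (k + 1)) := by
        intro j hj
        rw [rLah_succ_succ]
        push_cast
        ring
      rw [Finset.sum_congr rfl hterm, Finset.sum_add_distrib, ← Finset.mul_sum,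
        ih k, ih (k + 1)]
      have := binom_fall (2 * (s : ℤ) - 2 * r) n k
      push_cast at this ⊢
      linarith [this]

theorem rLah_orthogonality_falling (n k r s : ℕ) (hkn : k ≤ n) (hrs : r < s) :
    (n.choose k : ℤ) * ∏ i ∈ range (n - k), (2 * (s : ℤ) - 2 * r - i) =
      ∑ j ∈ Icc k n, (-1) ^ (n - j) * rLah r n j * rLah s j k := by
  rw [← main r s n k]
  refine (Finset.sum_subset ?_ ?_).symm
  · intro j hj
    rw [Finset.mem_Icc] at hj
    rw [Finset.mem_range]
    omega
  · intro j hj hj'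
    rw [Finset.mem_range] at hj
    rw [Finset.mem_Icc] at hj'
    have : j < k := by omega
    rw [rLah_zero_of_lt s j k this]
    ring
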